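/- If G is a complete graph with at least two vertices and H is a well-dominated graph with γ(H) = 2, then every minimal dominating set of the lexicographic product G[H] has size 2; in particular G[H] is well-dominated. -/

import Mathlib

open SimpleGraph Finset

/-- Open neighborhood of a set: vertices having a neighbor in `S`. -/
def nbhd {V : Type*} (G : SimpleGraph V) (S : Set V) : Set V := {v | ∃ u ∈ S, G.Adj u v}

/-- Closed neighborhood of a vertex. -/
def closedNbhd {V : Type*} (G : SimpleGraph V) (v : V) : Set V := insert v (G.neighborSet v)

/-- `S` dominates vertex `v`. -/
def Dominates {V : Type*} (G : SimpleGraph V) (S : Set V) (v : V) : Prop :=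
  v ∈ S ∨ ∃ u ∈ S, G.Adj u v

/-- `D` is a dominating set of `G`. -/
def IsDomSet {V : Type*} (G : SimpleGraph V) (D : Set V) : Prop := ∀ v, Dominates G D v

/-- `D` is a minimal dominating set of `G`. -/
def IsMinDomSet {V : Type*} (G : SimpleGraph V) (D : Set V) : Prop :=
  IsDomSet G D ∧ ∀ D' ⊂ D, ¬ IsDomSet G D'

/-- `D` is an irreducible dominating set of `G`. -/
def IsIrredDomSet {V : Type*} (G : SimpleGraph V) (D : Set V) : Prop :=
  IsDomSet G D ∧ ¬ ∃ u ∈ D, IsDomSet G (D \ {u}) ∧ nbhd G D = nbhd G (D \ {u})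

/-- Lexicographic product of two simple graphs. -/
def lexProd {V W : Type*} (G : SimpleGraph V) (H : SimpleGraph W) : SimpleGraph (V × W) where
  Adj p q := G.Adj p.1 q.1 ∨ (p.1 = q.1 ∧ H.Adj p.2 q.2)
  symm := by
    constructor
    rintro p q (h | ⟨e, h⟩)
    · exact Or.inl h.symm
    · exact Or.inr ⟨e.symm, h.symm⟩
  loopless := by
    constructor
    rintro p (h | ⟨_, h⟩)
    · exact G.loopless.irrefl _ h
    · exact H.loopless.irrefl _ h

/-- Projection of `D ⊆ V(G) × V(H)` to `G`. -/
def projG {V W : Type*} (D : Set (V × W)) : Set V := {x | ∃ y, (x, y) ∈ D}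

/-- Fiber of `D ⊆ V(G) × V(H)` over `x ∈ V(G)`. -/
def projH {V W : Type*} (D : Set (V × W)) (x : V) : Set W := {y | (x, y) ∈ D}

/-- The domination number. -/
noncomputable def domNum {V : Type*} [Fintype V] (G : SimpleGraph V) : ℕ :=
  sInf {n | ∃ D : Finset V, IsDomSet G ↑D ∧ D.card = n}

/-- A graph is well-dominated if all its minimal dominating sets have the same size. -/
def WellDominated (V : Type*) [Fintype V] (G : SimpleGraph V) : Prop :=
  ∀ D₁ D₂ : Finset V, IsMinDomSet G ↑D₁ → IsMinDomSet G ↑D₂ → D₁.card = D₂.card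

theorem stmt16 {V W : Type*} [Fintype V] [Fintype W]
    (G : SimpleGraph V) (H : SimpleGraph W)
    (hGcomplete : G = ⊤) (hVcard : 2 ≤ Fintype.card V)
    (hHwd : WellDominated W H) (hHγ : domNum H = 2) :
    (∀ D : Finset (V × W), IsMinDomSet (lexProd G H) ↑D → D.card = 2) ∧
      WellDominated (V × W) (lexProd G H) := by
  classical
  subst hGcomplete
  -- basic facts about H
  have hUnivDom : IsDomSet H ↑(Finset.univ : Finset W) := fun v => Or.inl (by simp)
  have hne : {n | ∃ D : Finset W, IsDomSet H ↑D ∧ D.card = n}.Nonempty :=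
    ⟨_, Finset.univ, hUnivDom, rfl⟩
  have h2mem : 2 ∈ {n | ∃ D : Finset W, IsDomSet H ↑D ∧ D.card = n} := by
    rw [← hHγ]; exact Nat.sInf_mem hne
  obtain ⟨D₀, hD₀dom, hD₀card⟩ := h2mem
  have hlow : ∀ S : Finset W, IsDomSet H ↑S → 2 ≤ S.card := by
    intro S hS
    rw [← hHγ]
    exact Nat.sInf_le ⟨S, hS, rfl⟩
  have hD₀min : IsMinDomSet H ↑D₀ := by
    refine ⟨hD₀dom, ?_⟩
    rintro D' hsub hdom
    have hfin : D'.Finite := Set.Finite.subset D₀.finite_toSet hsub.subset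
    have hss : hfin.toFinset ⊂ D₀ := by
      rw [← Finset.coe_ssubset, hfin.coe_toFinset]; exact hsub
    have h1 : hfin.toFinset.card < D₀.card := Finset.card_lt_card hss
    have h2 : 2 ≤ hfin.toFinset.card := by
      apply hlow
      rw [hfin.coe_toFinset]; exact hdom
    omega
  have hHminCard : ∀ S : Finset W, IsMinDomSet H ↑S → S.card = 2 := fun S hS =>
    (hHwd S D₀ hS hD₀min).trans hD₀card
  have hWne : Nonempty W := by
    have : D₀.Nonempty := Finset.card_pos.mp (by omega)
    exact ⟨this.choose⟩
  have hVne : Nonempty V := by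
    have : 0 < Fintype.card V := by omega
    exact Fintype.card_pos_iff.mp this
  -- main claim
  have key : ∀ D : Finset (V × W), IsMinDomSet (lexProd (⊤ : SimpleGraph V) H) ↑D → D.card = 2 := by
    intro D hD
    obtain ⟨hDdom, hDmin⟩ := hD
    have hDne : D.Nonempty := by
      obtain ⟨x⟩ := hVne; obtain ⟨y⟩ := hWne
      rcases hDdom (x, y) with h | ⟨u, hu, _⟩
      · exact ⟨_, h⟩
      · exact ⟨u, hu⟩
    by_cases hcase : ∃ a ∈ D, ∃ b ∈ D, a.1 ≠ b.1
    · -- two elements with distinct first coordinates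
      obtain ⟨a, ha, b, hb, hab⟩ := hcase
      have hpair : IsDomSet (lexProd (⊤ : SimpleGraph V) H) ({a, b} : Set (V × W)) := by
        intro v
        by_cases hv : v.1 = a.1
        · refine Or.inr ⟨b, by simp, Or.inl ?_⟩
          simp only [top_adj]
          rw [hv]; exact fun h => hab h.symm
        · exact Or.inr ⟨a, by simp, Or.inl (by simp only [top_adj]; exact fun h => hv h.symm)⟩
      have hsubpair : ({a, b} : Set (V × W)) ⊆ ↑D := by
        rintro v (rfl | rfl) <;> simpa [*]
      have heq : ({a, b} : Set (V × W)) = ↑D := by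
        by_contra h
        exact hDmin _ ((Set.ssubset_iff_subset_ne).mpr ⟨hsubpair, h⟩) hpair
      have hD' : D = ({a, b} : Finset (V × W)) := by
        apply Finset.coe_injective
        rw [← heq, Finset.coe_pair]
      rw [hD']
      exact Finset.card_pair (fun h => hab (by rw [h]))
    · push_neg at hcase
      obtain ⟨p, hp⟩ := hDne
      set x := p.1 with hxdef
      have hx : ∀ a ∈ D, a.1 = x := fun a ha => hcase a ha p hp
      set S := D.image Prod.snd with hSdef
      have hmemS : ∀ y, y ∈ S ↔ (x, y) ∈ D := by
        intro y
        constructor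
        · intro hy
          obtain ⟨a, ha, rfl⟩ := Finset.mem_image.mp hy
          have := hx a ha
          rwa [← this]
        · intro hy
          exact Finset.mem_image.mpr ⟨(x, y), hy, rfl⟩
      have hcardeq : S.card = D.card := by
        apply Finset.card_image_of_injOn
        intro a ha b hb h
        have h1 := hx a ha
        have h2 := hx b hb
        exact Prod.ext (h1.trans h2.symm) h
      have hSdom : IsDomSet H ↑S := by
        intro y
        rcases hDdom (x, y) with h | ⟨u, hu, hadj⟩
        · exact Or.inl ((hmemS y).mpr h)
        · rcases hadj with h | ⟨he, h⟩
          · exact absurd h (by simp [hx u hu])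
          · refine Or.inr ⟨u.2, ?_, h⟩
            have : (x, u.2) = u := Prod.ext (hx u hu).symm rfl
            exact (hmemS u.2).mpr (this ▸ hu)
      have hSmin : IsMinDomSet H ↑S := by
        refine ⟨hSdom, ?_⟩
        rintro S' hsub hdom'
        set D' : Set (V × W) := (fun y => (x, y)) '' S' with hD'def
        have hD'sub : D' ⊆ ↑D := by
          rintro _ ⟨y, hy, rfl⟩
          exact Finset.mem_coe.mpr ((hmemS y).mp (Finset.mem_coe.mp (hsub.subset hy)))
        have hD'ss : D' ⊂ ↑D := by
          refine ⟨hD'sub, ?_⟩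
          obtain ⟨z, hz, hz'⟩ := Set.exists_of_ssubset hsub
          intro hcon
          have : (x, z) ∈ D' := hcon (Finset.mem_coe.mpr ((hmemS z).mp (Finset.mem_coe.mp hz)))
          obtain ⟨y, hy, hey⟩ := this
          exact hz' (by rwa [(Prod.mk.injEq _ _ _ _).mp hey |>.2] at hy)
        have hD'dom : IsDomSet (lexProd (⊤ : SimpleGraph V) H) D' := by
          rintro ⟨v1, v2⟩
          rcases hdom' v2 with h | ⟨u, hu, hadj⟩
          · by_cases hv : v1 = x
            · exact Or.inl ⟨v2, h, by rw [hv]⟩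
            · exact Or.inr ⟨(x, v2), ⟨v2, h, rfl⟩, Or.inl (by simp only [top_adj]; exact fun hc => hv hc.symm)⟩
          · by_cases hv : v1 = x
            · exact Or.inr ⟨(x, u), ⟨u, hu, rfl⟩, Or.inr ⟨hv.symm, hadj⟩⟩
            · exact Or.inr ⟨(x, u), ⟨u, hu, rfl⟩, Or.inl (by simp only [top_adj]; exact fun hc => hv hc.symm)⟩
        exact hDmin D' hD'ss hD'dom
      rw [← hcardeq]
      exact hHminCard S hSmin
  exact ⟨key, fun D₁ D₂ h₁ h₂ => (key D₁ h₁).trans (key D₂ h₂).symm⟩
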